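/- Let ρ be a density matrix on ℂ^N ⊗ ℂ^N and σ a density matrix on ℂ^M ⊗ ℂ^M. If ρ ⊗ σ, regarded as a density matrix on ℂ^{NM} ⊗ ℂ^{NM} via the reordering isomorphism (ℂ^N ⊗ ℂ^N) ⊗ (ℂ^M ⊗ ℂ^M) ≅ (ℂ^N ⊗ ℂ^M) ⊗ (ℂ^N ⊗ ℂ^M), belongs to S_k, then ρ belongs to S_k on ℂ^N ⊗ ℂ^N. -/

import Mathlib

open Matrix BigOperators
open scoped ComplexOrder

/-- The `n × n` matrix `M_ψ` associated to a vector `ψ ∈ ℂ^α ⊗ ℂ^β`,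
with entries `(M_ψ)_{ij} = ⟨e_i ⊗ e_j, ψ⟩ = ψ (i, j)`. -/
def matOfVec {α β : Type*} (ψ : α × β → ℂ) : Matrix α β ℂ :=
  Matrix.of fun i j => ψ (i, j)

/-- The Schmidt rank of a bipartite vector is the rank of its associated matrix. -/
noncomputable def schmidtRank {α β : Type*} [Fintype β] (ψ : α × β → ℂ) : ℕ :=
  (matOfVec ψ).rank

/-- `ψ` is a unit vector. -/
def IsUnitVec {γ : Type*} [Fintype γ] (ψ : γ → ℂ) : Prop :=
  ∑ x, Complex.normSq (ψ x) = 1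

/-- The outer product `|ψ⟩⟨ψ|`. -/
def outer {γ : Type*} (ψ : γ → ℂ) : Matrix γ γ ℂ :=
  Matrix.of fun x y => ψ x * star (ψ y)

/-- `ρ ∈ S_k`: `ρ` admits a decomposition `ρ = ∑ i, p i • |ψ i⟩⟨ψ i|` with `p i ≥ 0`,
`∑ i, p i = 1`, each `ψ i` a unit vector of Schmidt rank at most `k`. -/
def InSchmidtClass {α : Type*} [Fintype α] (k : ℕ)
    (ρ : Matrix (α × α) (α × α) ℂ) : Prop :=
  ∃ (m : ℕ) (p : Fin m → ℝ) (ψ : Fin m → α × α → ℂ),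
    (∀ i, 0 ≤ p i) ∧ (∑ i, p i) = 1 ∧
    (∀ i, IsUnitVec (ψ i)) ∧ (∀ i, schmidtRank (ψ i) ≤ k) ∧
    ρ = ∑ i, (p i : ℂ) • outer (ψ i)

/-- The map `1 ⊗ Λ`, applying `Λ` to each block of a matrix indexed by `γ × Fin n`. -/
def blockMap {γ : Type*} {n m : ℕ}
    (Λ : Matrix (Fin n) (Fin n) ℂ → Matrix (Fin m) (Fin m) ℂ)
    (X : Matrix (γ × Fin n) (γ × Fin n) ℂ) : Matrix (γ × Fin m) (γ × Fin m) ℂ :=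
  Matrix.of fun a b => Λ (Matrix.of fun s t => X (a.1, s) (b.1, t)) a.2 b.2

/-- `Λ` is Hermiticity-preserving: `Λ(X†) = Λ(X)†`. -/
def HermPreserving {n m : ℕ}
    (Λ : Matrix (Fin n) (Fin n) ℂ → Matrix (Fin m) (Fin m) ℂ) : Prop :=
  ∀ X, Λ Xᴴ = (Λ X)ᴴ

/-- `Λ` is `k`-positive: `(1 ⊗ Λ)(|ψ⟩⟨ψ|)` is positive semidefinite for every
unit vector `ψ ∈ ℂ^N ⊗ ℂ^N` of Schmidt rank at most `k`. -/
def kPositive {N : ℕ} (k : ℕ)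
    (Λ : Matrix (Fin N) (Fin N) ℂ → Matrix (Fin N) (Fin N) ℂ) : Prop :=
  ∀ ψ : Fin N × Fin N → ℂ, IsUnitVec ψ → schmidtRank ψ ≤ k →
    (blockMap Λ (outer ψ)).PosSemidef

/-- The Kronecker product `ρ ⊗ σ` of bipartite states, with indices regrouped via the
reordering isomorphism `(ℂ^α ⊗ ℂ^α) ⊗ (ℂ^β ⊗ ℂ^β) ≅ (ℂ^α ⊗ ℂ^β) ⊗ (ℂ^α ⊗ ℂ^β)` so that the
first factor collects the two Alice systems and the second the two Bob systems. -/
def reorderedKron {α β : Type*}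
    (ρ : Matrix (α × α) (α × α) ℂ) (σ : Matrix (β × β) (β × β) ℂ) :
    Matrix ((α × β) × (α × β)) ((α × β) × (α × β)) ℂ :=
  Matrix.of fun x y =>
    ρ (x.1.1, x.2.1) (y.1.1, y.2.1) * σ (x.1.2, x.2.2) (y.1.2, y.2.2)

/-- If `ρ ⊗ σ` (reordered as a bipartite state on `ℂ^{NM} ⊗ ℂ^{NM}`)
belongs to `S_k`, then `ρ` belongs to `S_k`. -/
lemma rank_submatrix_le' {m n m' n' : Type*} [Fintype m] [Fintype n] [Fintype m'] [Fintype n']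
    [DecidableEq m] [DecidableEq n]
    (A : Matrix m n ℂ) (f : m' → m) (g : n' → n) :
    (A.submatrix f g).rank ≤ A.rank := by
  have hPA : (Matrix.of fun (i : m') (x : m) => if x = f i then (1:ℂ) else 0) * A
      = A.submatrix f id := by
    ext i y
    simp [Matrix.mul_apply, Matrix.submatrix_apply]
  have hQ : (A.submatrix f id) * (Matrix.of fun (y : n) (j : n') => if y = g j then (1:ℂ) else 0)
      = A.submatrix f g := by
    ext i j
    simp [Matrix.mul_apply, Matrix.submatrix_apply]
  calc (A.submatrix f g).rank = ((Matrix.of fun (i : m') (x : m) => if x = f i then (1:ℂ) else 0) * A *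
        (Matrix.of fun (y : n) (j : n') => if y = g j then (1:ℂ) else 0)).rank := by rw [hPA, hQ]
    _ ≤ ((Matrix.of fun (i : m') (x : m) => if x = f i then (1:ℂ) else 0) * A).rank :=
        Matrix.rank_mul_le_left _ _
    _ ≤ A.rank := Matrix.rank_mul_le_right _ _

lemma rank_smul_le {m n : Type*} [Fintype m] [Fintype n] [DecidableEq m]
    (c : ℂ) (A : Matrix m n ℂ) : (c • A).rank ≤ A.rank := by
  have : c • A = (Matrix.diagonal fun _ => c) * A := by
    ext i j
    simp only [Matrix.smul_apply, smul_eq_mul]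
    exact (Matrix.diagonal_mul (fun _ => c) A i j).symm
  rw [this]
  exact Matrix.rank_mul_le_right _ _

lemma rank_vecMulVec_le {m n : Type*} [Fintype m] [Fintype n]
    (u : m → ℂ) (v : n → ℂ) : (Matrix.vecMulVec u v).rank ≤ 1 := by
  rw [Matrix.vecMulVec_eq (ι := Unit)]
  calc (Matrix.replicateCol Unit u * Matrix.replicateRow Unit v).rank ≤ (Matrix.replicateCol Unit u).rank :=
        Matrix.rank_mul_le_left _ _
    _ ≤ Fintype.card Unit := Matrix.rank_le_card_width _
    _ = 1 := by simp

lemma inSchmidtClass_of_index {α : Type*} [Fintype α] {k : ℕ}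
    {ρ : Matrix (α × α) (α × α) ℂ} {ι : Type*} [Fintype ι]
    (p : ι → ℝ) (ψ : ι → α × α → ℂ)
    (h0 : ∀ i, 0 ≤ p i) (h1 : ∑ i, p i = 1)
    (hu : ∀ i, IsUnitVec (ψ i)) (hr : ∀ i, schmidtRank (ψ i) ≤ k)
    (hd : ρ = ∑ i, (p i : ℂ) • outer (ψ i)) : InSchmidtClass k ρ := by
  obtain e := (Fintype.equivFin ι).symm
  refine ⟨Fintype.card ι, p ∘ e, ψ ∘ e, fun i => h0 _, ?_, fun i => hu _, fun i => hr _, ?_⟩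
  · simpa using (Equiv.sum_comp e p).trans h1
  · rw [hd]; exact (Equiv.sum_comp e (fun i => (p i : ℂ) • outer (ψ i))).symm

theorem schmidt_class_of_kron {N M k : ℕ} (hk : 1 ≤ k)
    (ρ : Matrix (Fin N × Fin N) (Fin N × Fin N) ℂ)
    (hρ : ρ.PosSemidef) (hρτ : ρ.trace = 1)
    (σ : Matrix (Fin M × Fin M) (Fin M × Fin M) ℂ)
    (hσ : σ.PosSemidef) (hστ : σ.trace = 1)
    (h : InSchmidtClass k (reorderedKron ρ σ)) :
    InSchmidtClass k ρ := by
  obtain ⟨m, p, ψ, hp0, hp1, hunit, hrank, hdec⟩ := h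
  rcases Nat.eq_zero_or_pos N with hN | hN
  · exfalso
    subst hN
    rw [Matrix.trace] at hρτ
    simp at hρτ
  have a0 : Fin N := ⟨0, hN⟩
  set ι := Fin m × (Fin M × Fin M) with hι
  let φ : ι → Fin N × Fin N → ℂ := fun j x => ψ j.1 ((x.1, j.2.1), (x.2, j.2.2))
  let n : ι → ℝ := fun j => ∑ x, Complex.normSq (φ j x)
  have hn0 : ∀ j, 0 ≤ n j := fun j => Finset.sum_nonneg fun x _ => Complex.normSq_nonneg _
  let χ : Fin N × Fin N → ℂ := fun x => if x = (a0, a0) then 1 else 0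
  let φh : ι → Fin N × Fin N → ℂ := fun j =>
    if n j = 0 then χ else fun x => ((Real.sqrt (n j) : ℂ))⁻¹ * φ j x
  let q : ι → ℝ := fun j => p j.1 * n j
  -- zero-norm slices vanish
  have hzero : ∀ j, n j = 0 → ∀ x, φ j x = 0 := by
    intro j hj x
    have := (Finset.sum_eq_zero_iff_of_nonneg
      (fun x _ => Complex.normSq_nonneg (φ j x))).1 hj x (Finset.mem_univ x)
    exact Complex.normSq_eq_zero.1 this
  -- total weight one
  have hsum1 : ∀ i : Fin m, ∑ st : Fin M × Fin M, n (i, st) = 1 := by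
    intro i
    let E : (Fin M × Fin M) × (Fin N × Fin N) ≃ (Fin N × Fin M) × (Fin N × Fin M) :=
      ⟨fun z => ((z.2.1, z.1.1), (z.2.2, z.1.2)),
       fun y => ((y.1.2, y.2.2), (y.1.1, y.2.1)),
       fun z => rfl, fun y => rfl⟩
    calc ∑ st : Fin M × Fin M, n (i, st)
        = ∑ st : Fin M × Fin M, ∑ x : Fin N × Fin N,
            Complex.normSq (ψ i ((x.1, st.1), (x.2, st.2))) := rfl
      _ = ∑ z : (Fin M × Fin M) × (Fin N × Fin N),
            Complex.normSq (ψ i ((z.2.1, z.1.1), (z.2.2, z.1.2))) :=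
          (Fintype.sum_prod_type
            (f := fun z : (Fin M × Fin M) × (Fin N × Fin N) =>
              Complex.normSq (ψ i ((z.2.1, z.1.1), (z.2.2, z.1.2))))).symm
      _ = ∑ y, Complex.normSq (ψ i y) := Equiv.sum_comp E (fun y => Complex.normSq (ψ i y))
      _ = 1 := hunit i
  have hq0 : ∀ j, 0 ≤ q j := fun j => mul_nonneg (hp0 j.1) (hn0 j)
  have hq1 : ∑ j : ι, q j = 1 := by
    rw [Fintype.sum_prod_type]
    calc ∑ i, ∑ st, p i * n (i, st) = ∑ i, p i * ∑ st, n (i, st) := by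
          simp [Finset.mul_sum]
      _ = ∑ i, p i := by simp [hsum1]
      _ = 1 := hp1
  -- entrywise decomposition hypothesis
  have hdec' : ∀ u v, reorderedKron ρ σ u v = ∑ i, (p i : ℂ) * (ψ i u * star (ψ i v)) := by
    intro u v
    have := congrArg (fun X : Matrix ((Fin N × Fin M) × (Fin N × Fin M))
      ((Fin N × Fin M) × (Fin N × Fin M)) ℂ => X u v) hdec
    simpa [Matrix.sum_apply, outer] using this
  -- partial trace identity
  have hkey : ρ = ∑ j : ι, (p j.1 : ℂ) • outer (φ j) := by
    ext x y
    have h2 : ρ x y = ∑ st : Fin M × Fin M,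
        reorderedKron ρ σ ((x.1, st.1), (x.2, st.2)) ((y.1, st.1), (y.2, st.2)) := by
      have e1 : ∑ st : Fin M × Fin M,
          reorderedKron ρ σ ((x.1, st.1), (x.2, st.2)) ((y.1, st.1), (y.2, st.2))
          = ∑ st : Fin M × Fin M, ρ x y * σ st st := by
        apply Finset.sum_congr rfl
        intro st _
        simp [reorderedKron]
      rw [e1, ← Finset.mul_sum]
      have e2 : ∑ st : Fin M × Fin M, σ st st = σ.trace := by
        simp [Matrix.trace, Matrix.diag]
      rw [e2, hστ, mul_one]
    rw [h2]
    simp only [hdec']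
    rw [Finset.sum_comm]
    rw [Matrix.sum_apply]
    rw [Fintype.sum_prod_type]
    simp [outer, φ]
  -- final decomposition
  have hd2 : ρ = ∑ j : ι, (q j : ℂ) • outer (φh j) := by
    rw [hkey]
    apply Finset.sum_congr rfl
    intro j _
    by_cases hnj : n j = 0
    · have ho : outer (φ j) = 0 := by
        ext x y
        simp [outer, hzero j hnj]
      simp [ho, q, hnj]
    · have hφh : φh j = fun x => ((Real.sqrt (n j) : ℂ))⁻¹ * φ j x := by
        simp [φh, hnj]
      have hne : ((n j : ℂ)) ≠ 0 := Complex.ofReal_ne_zero.2 hnj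
      ext x y
      rw [hφh]
      simp only [outer, Matrix.smul_apply, Matrix.of_apply, smul_eq_mul]
      have hstar : star ((Real.sqrt (n j) : ℂ)) = (Real.sqrt (n j) : ℂ) := by
        simp [Complex.star_def, Complex.conj_ofReal]
      rw [star_mul', star_inv₀, hstar]
      have hcc : ((Real.sqrt (n j) : ℂ))⁻¹ * ((Real.sqrt (n j) : ℂ))⁻¹ = ((n j : ℂ))⁻¹ := by
        rw [← mul_inv]
        congr 1
        rw [← Complex.ofReal_mul, Real.mul_self_sqrt (hn0 j)]
      have hq : ((q j : ℂ)) = (p j.1 : ℂ) * (n j : ℂ) := by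
        simp [q]
      rw [hq]
      have hone : (↑(n j) : ℂ) * (((Real.sqrt (n j) : ℂ))⁻¹ * ((Real.sqrt (n j) : ℂ))⁻¹) = 1 := by
        rw [hcc]; exact mul_inv_cancel₀ hne
      linear_combination (-(↑(p j.1) * φ j x * star (φ j y))) * hone
  -- unit vectors
  have hu : ∀ j, IsUnitVec (φh j) := by
    intro j
    by_cases hnj : n j = 0
    · have : φh j = χ := by simp [φh, hnj]
      rw [this]
      unfold χ
      rw [IsUnitVec]
      rw [Finset.sum_eq_single (a0, a0)]
      · simp
      · intro b _ hb; simp [hb]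
      · intro hb; exact absurd (Finset.mem_univ _) hb
    · have hφh : φh j = fun x => ((Real.sqrt (n j) : ℂ))⁻¹ * φ j x := by
        simp [φh, hnj]
      rw [IsUnitVec, hφh]
      simp only [Complex.normSq_mul, map_inv₀, Complex.normSq_ofReal,
        Real.mul_self_sqrt (hn0 j)]
      rw [← Finset.mul_sum]
      exact inv_mul_cancel₀ hnj
  -- ranks
  have hr : ∀ j, schmidtRank (φh j) ≤ k := by
    intro j
    by_cases hnj : n j = 0
    · have : φh j = χ := by simp [φh, hnj]
      rw [this]
      have hm : matOfVec χ = Matrix.vecMulVec (fun a : Fin N => if a = a0 then (1:ℂ) else 0)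
          (fun b : Fin N => if b = a0 then (1:ℂ) else 0) := by
        ext a b
        simp only [matOfVec, Matrix.of_apply, Matrix.vecMulVec_apply, χ, Prod.mk.injEq]
        by_cases ha : a = a0 <;> by_cases hb : b = a0 <;> simp [ha, hb]
      rw [schmidtRank, hm]
      exact le_trans (_root_.rank_vecMulVec_le _ _) hk
    · have hφh : φh j = fun x => ((Real.sqrt (n j) : ℂ))⁻¹ * φ j x := by
        simp [φh, hnj]
      rw [schmidtRank, hφh]
      have hm : matOfVec (fun x => ((Real.sqrt (n j) : ℂ))⁻¹ * φ j x)
          = ((Real.sqrt (n j) : ℂ))⁻¹ • matOfVec (φ j) := by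
        ext a b
        simp [matOfVec]
      rw [hm]
      refine le_trans (rank_smul_le _ _) ?_
      have hsub : matOfVec (φ j)
          = (matOfVec (ψ j.1)).submatrix (fun a : Fin N => (a, j.2.1))
              (fun b : Fin N => (b, j.2.2)) := by
        ext a b
        simp [matOfVec, φ]
      rw [hsub]
      exact le_trans (rank_submatrix_le' _ _ _) (hrank j.1)
  exact inSchmidtClass_of_index q φh hq0 hq1 hu hr hd2
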